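/- Let Y_1 > Y_2 > ... > Y_{2n} be 2n distinct nonnegative reals, arising as n pairs, where for each pair exactly one element is labeled 'value' uniformly at random and independently across pairs. Let p_j be the probability that Y_j is among the k largest elements labeled 'value'. Then the expected sum over labeled values selected by a prophet choosing the top k values satisfies: sum_{j=1}^{2n} p_j * Y_j <= (1/2) * sum_{j=1}^{2k} Y_j. -/

import Mathlib

open Finset

/-- The key deterministic inequality: if `0 ≤ p j ≤ 1/2`, `∑ p ≤ k`, and `Y` is a
nonnegative antitone sequence, then `∑ p j * Y j ≤ (1/2) * ∑_{j < 2k} Y j`. -/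
lemma key_ineq (N k : ℕ) (h2k : 2*k ≤ N) (p Y : Fin N → ℝ)
    (hp0 : ∀ j, 0 ≤ p j) (hp1 : ∀ j, p j ≤ 1/2) (hsum : ∑ j, p j ≤ (k : ℝ))
    (hY0 : ∀ j, 0 ≤ Y j) (hYanti : Antitone Y) :
    ∑ j, p j * Y j ≤ (1/2) * ∑ j ∈ univ.filter (fun j : Fin N => (j : ℕ) < 2*k), Y j := by
  classical
  set c : ℝ := if h : 2*k < N then Y ⟨2*k, h⟩ else 0 with hc
  have hc0 : 0 ≤ c := by
    rw [hc]; split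
    · exact hY0 _
    · exact le_refl 0
  have hcle : ∀ j : Fin N, (j : ℕ) < 2*k → c ≤ Y j := by
    intro j hj
    rw [hc]; split
    · exact hYanti (by rw [Fin.le_def]; simpa using Nat.le_of_lt hj)
    · exact hY0 j
  have hcge : ∀ j : Fin N, ¬ ((j : ℕ) < 2*k) → Y j ≤ c := by
    intro j hj
    have hj' : 2*k ≤ (j : ℕ) := Nat.le_of_not_lt hj
    have h2 : 2*k < N := lt_of_le_of_lt hj' j.isLt
    rw [hc]
    simp only [h2, dif_pos]
    exact hYanti (by rw [Fin.le_def]; simpa using hj')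
  set S1 := univ.filter (fun j : Fin N => (j : ℕ) < 2*k) with hS1
  set S2 := univ.filter (fun j : Fin N => ¬ (j : ℕ) < 2*k) with hS2
  have hcard : S1.card = 2*k := by
    rw [hS1]
    refine (card_nbij (fun j : Fin N => (j : ℕ)) (t := Finset.range (2*k)) ?_ ?_ ?_).trans
      (Finset.card_range _)
    · intro a ha
      simp only [mem_coe, mem_filter, mem_univ, true_and] at ha
      simpa using ha
    · exact Fin.val_injective.injOn
    · intro m hm
      simp only [Finset.coe_range, Set.mem_Iio] at hm
      refine ⟨⟨m, by omega⟩, ?_, rfl⟩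
      simp [hm]
  have hA : ∑ j ∈ S1, p j * Y j ≤ ∑ j ∈ S1, ((1/2) * Y j + c * p j - (1/2)*c) := by
    apply Finset.sum_le_sum
    intro j hj
    rw [hS1, mem_filter] at hj
    have := hcle j hj.2
    have := hp1 j
    nlinarith
  have hB : ∑ j ∈ S2, p j * Y j ≤ ∑ j ∈ S2, (c * p j) := by
    apply Finset.sum_le_sum
    intro j hj
    rw [hS2, mem_filter] at hj
    have := hcge j hj.2
    have := hp0 j
    nlinarith
  have hA' : ∑ j ∈ S1, ((1/2) * Y j + c * p j - (1/2)*c)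
      = (1/2) * ∑ j ∈ S1, Y j + c * ∑ j ∈ S1, p j - (1/2)*c*(2*(k:ℝ)) := by
    rw [Finset.sum_sub_distrib, Finset.sum_add_distrib, ← Finset.mul_sum, ← Finset.mul_sum,
      Finset.sum_const, hcard, nsmul_eq_mul]
    push_cast
    ring
  have hB' : ∑ j ∈ S2, (c * p j) = c * ∑ j ∈ S2, p j := (Finset.mul_sum _ _ _).symm
  have hsplit1 : ∑ j ∈ S1, p j * Y j + ∑ j ∈ S2, p j * Y j = ∑ j, p j * Y j :=
    Finset.sum_filter_add_sum_filter_not _ _ _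
  have hsplit2 : ∑ j ∈ S1, p j + ∑ j ∈ S2, p j = ∑ j, p j :=
    Finset.sum_filter_add_sum_filter_not _ _ _
  have hck2 : c * ∑ j ∈ S1, p j + c * ∑ j ∈ S2, p j ≤ c * k := by
    rw [← mul_add, hsplit2]
    exact mul_le_mul_of_nonneg_left hsum hc0
  linarith

/-- Flip the labels of the pair `{j, σ j}`. -/
def flipPair {N : ℕ} (σ : Fin N → Fin N) (j : Fin N) (ℓ : Fin N → Bool) : Fin N → Bool :=
  fun i => if i = j ∨ i = σ j then !(ℓ i) else ℓ i

lemma count_strict_mono {N : ℕ} (ℓ : Fin N → Bool) {a b : Fin N} (hab : a < b)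
    (ha : ℓ a = true) :
    (univ.filter fun i => i < a ∧ ℓ i = true).card
      < (univ.filter fun i => i < b ∧ ℓ i = true).card := by
  apply Finset.card_lt_card
  rw [Finset.ssubset_iff_of_subset]
  · exact ⟨a, by simp [hab, ha], by simp⟩
  · intro i hi
    simp only [mem_filter, mem_univ, true_and] at hi ⊢
    exact ⟨lt_trans hi.1 hab, hi.2⟩

lemma selected_card_le {N k : ℕ} (ℓ : Fin N → Bool) :
    (univ.filter fun j : Fin N => ℓ j = true ∧
      (univ.filter fun i => i < j ∧ ℓ i = true).card < k).card ≤ k := by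
  have h := Finset.card_le_card_of_injOn
    (s := univ.filter fun j : Fin N => ℓ j = true ∧
      (univ.filter fun i => i < j ∧ ℓ i = true).card < k)
    (f := fun j : Fin N => (univ.filter fun i => i < j ∧ ℓ i = true).card)
    (t := Finset.range k) ?_ ?_
  · simpa using h
  · intro j hj
    simp only [mem_coe, mem_filter, mem_univ, true_and] at hj
    simpa using hj.2
  · intro a ha b hb hab
    simp only [coe_filter, Set.mem_setOf_eq, mem_univ, true_and] at ha hb
    rcases lt_trichotomy a b with h | h | h
    · exact absurd hab (ne_of_lt (count_strict_mono ℓ h ha.1))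
    · exact h
    · exact absurd hab.symm (ne_of_lt (count_strict_mono ℓ h hb.1))

/-- `2*n` distinct nonnegative reals `Y_0 > Y_1 > ...` (indexed so larger
index = smaller value), arising as `n` pairs given by the fixed-point-free involution
`σ`.  A uniformly random labelling `ℓ` (uniform over the set `L` of labellings in which
each pair gets exactly one `value`, i.e. `ℓ (σ j) = !ℓ j`; here `ℓ j = true` means
`Y j` is labelled `value`) determines the prophet's picks: `Y j` is selected iff it is
a value and fewer than `k` larger items are values.  With `p j` the probability that
`Y j` is among the `k` largest values, `∑ j, p j * Y j ≤ (1/2) * ∑_{j < 2k} Y j`. -/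
theorem stmt1 (n k : ℕ) (hk : k ≤ n)
    (σ : Fin (2*n) → Fin (2*n)) (hσ : ∀ j, σ (σ j) = j) (hσ' : ∀ j, σ j ≠ j)
    (Y : Fin (2*n) → ℝ) (hY0 : ∀ j, 0 ≤ Y j) (hY : StrictAnti Y)
    (L : Finset (Fin (2*n) → Bool))
    (hL : L = Finset.univ.filter (fun ℓ => ∀ j, ℓ (σ j) = !(ℓ j)))
    (p : Fin (2*n) → ℝ)
    (hp : ∀ j, p j = ((L.filter (fun ℓ => ℓ j = true ∧
        (Finset.univ.filter (fun i => i < j ∧ ℓ i = true)).card < k)).card : ℝ) / 2 ^ n) :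
    ∑ j, p j * Y j ≤
      (1/2) * ∑ j ∈ Finset.univ.filter (fun j : Fin (2*n) => (j : ℕ) < 2*k), Y j := by
  classical
  have hmemL : ∀ ℓ, ℓ ∈ L ↔ ∀ j, ℓ (σ j) = !(ℓ j) := by
    intro ℓ; rw [hL]; simp
  have hσinj : Function.Injective σ := Function.Involutive.injective hσ
  set S : Finset (Fin (2*n)) := univ.filter (fun j => j < σ j) with hS
  have hmemS : ∀ j, j ∈ S ↔ j < σ j := by intro j; rw [hS]; simp
  have hmemS' : ∀ j, j ∉ S → σ j ∈ S := by
    intro j hj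
    rw [hmemS] at hj ⊢
    rw [hσ]
    exact lt_of_le_of_ne (le_of_not_gt hj) (hσ' j)
  -- S has exactly n elements
  have hcardS : S.card = n := by
    have hbij : S.card = (univ.filter (fun j : Fin (2*n) => ¬ j < σ j)).card := by
      refine Finset.card_nbij σ ?_ hσinj.injOn ?_
      · intro a ha
        simp only [hS, mem_coe, mem_filter, mem_univ, true_and] at ha ⊢
        rw [hσ]
        exact lt_asymm ha
      · intro m hm
        simp only [coe_filter, Set.mem_setOf_eq, mem_univ, true_and] at hm
        refine ⟨σ m, ?_, hσ m⟩
        rw [Finset.mem_coe, hmemS, hσ]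
        exact lt_of_le_of_ne (le_of_not_gt hm) (hσ' m)
    have htot := Finset.card_filter_add_card_filter_not (s := (univ : Finset (Fin (2*n))))
      (p := fun j => j < σ j)
    simp only [Finset.card_univ, Fintype.card_fin] at htot
    rw [hS] at hbij ⊢
    omega
  -- L has at most 2^n elements
  have hcardL : L.card ≤ 2^n := by
    have h := Finset.card_le_card_of_injOn (s := L)
      (t := (Finset.univ : Finset ({x // x ∈ S} → Bool)))
      (f := fun ℓ s => ℓ s.1) (fun _ _ => Finset.mem_univ _) ?_
    · calc L.card ≤ (Finset.univ : Finset ({x // x ∈ S} → Bool)).card := h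
        _ = 2^n := by
          rw [Finset.card_univ]
          simp [Fintype.card_fun, hcardS]
    · intro ℓ₁ h₁ ℓ₂ h₂ hfe
      have key : ∀ j ∈ S, ℓ₁ j = ℓ₂ j := fun j hj => congrFun hfe ⟨j, hj⟩
      funext j
      by_cases hj : j ∈ S
      · exact key j hj
      · have hσj : σ j ∈ S := hmemS' j hj
        have e1 : ℓ₁ j = !(ℓ₁ (σ j)) := by
          have := (hmemL ℓ₁).1 (Finset.mem_coe.1 h₁) (σ j)
          rw [hσ] at this
          exact this
        have e2 : ℓ₂ j = !(ℓ₂ (σ j)) := by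
          have := (hmemL ℓ₂).1 (Finset.mem_coe.1 h₂) (σ j)
          rw [hσ] at this
          exact this
        rw [e1, e2, key (σ j) hσj]
  -- the flip involution on labellings
  set F : Fin (2*n) → (Fin (2*n) → Bool) → (Fin (2*n) → Bool) := flipPair σ with hF
  have hFL : ∀ j ℓ, ℓ ∈ L → F j ℓ ∈ L := by
    intro j ℓ hm
    rw [hmemL] at hm ⊢
    intro i
    by_cases h1 : i = j
    · subst h1
      simp [hF, flipPair, hm i]
    · by_cases h2 : i = σ j
      · subst h2
        simp [hF, flipPair, hσ, hm j]
      · have c3 : ¬ (σ i = j ∨ σ i = σ j) := by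
          rintro (h | h)
          · exact h2 (by rw [← h, hσ])
          · exact h1 (hσinj h)
        have c4 : ¬ (i = j ∨ i = σ j) := by tauto
        simp only [hF, flipPair, if_neg c3, if_neg c4]
        exact hm i
  have hFF : ∀ j ℓ, F j (F j ℓ) = ℓ := by
    intro j ℓ
    funext i
    simp only [hF, flipPair]
    by_cases h : i = j ∨ i = σ j <;> simp [h]
  -- p j ≤ 1/2
  have hhalf : ∀ j, 2 * (L.filter fun ℓ => ℓ j = true).card ≤ 2^n := by
    intro j
    have hbij : (L.filter fun ℓ => ℓ j = true).card
        = (L.filter fun ℓ => ¬ (ℓ j = true)).card := by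
      refine Finset.card_nbij' (F j) (F j) ?_ ?_ ?_ ?_
      · intro ℓ hm
        rw [Finset.mem_coe, Finset.mem_filter] at hm ⊢
        refine ⟨hFL j ℓ hm.1, ?_⟩
        simp [hF, flipPair, hm.2]
      · intro ℓ hm
        rw [Finset.mem_coe, Finset.mem_filter] at hm ⊢
        refine ⟨hFL j ℓ hm.1, ?_⟩
        have hm2 : ℓ j = false := by
          rcases hm with ⟨_, h⟩
          simpa using h
        simp [hF, flipPair, hm2]
      · intro ℓ _; exact hFF j ℓ
      · intro ℓ _; exact hFF j ℓ
    have htot := Finset.card_filter_add_card_filter_not (s := L)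
      (p := fun ℓ => ℓ j = true)
    have h2 : 2 * (L.filter fun ℓ => ℓ j = true).card = L.card := by
      rw [two_mul]
      nth_rewrite 2 [hbij]
      exact htot
    rw [h2]
    exact hcardL
  have hp0 : ∀ j, 0 ≤ p j := by
    intro j; rw [hp]; positivity
  have hp1 : ∀ j, p j ≤ 1/2 := by
    intro j
    rw [hp, div_le_iff₀ (by positivity)]
    have hsub : (L.filter (fun ℓ => ℓ j = true ∧
        (Finset.univ.filter (fun i => i < j ∧ ℓ i = true)).card < k)).card
        ≤ (L.filter fun ℓ => ℓ j = true).card :=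
      Finset.card_le_card (Finset.monotone_filter_right _ (fun ℓ _ h => h.1))
    have h2 := hhalf j
    have hc : ((L.filter (fun ℓ => ℓ j = true ∧
        (Finset.univ.filter (fun i => i < j ∧ ℓ i = true)).card < k)).card : ℝ) * 2 ≤ 2^n := by
      have : (L.filter (fun ℓ => ℓ j = true ∧
          (Finset.univ.filter (fun i => i < j ∧ ℓ i = true)).card < k)).card * 2 ≤ 2^n :=
        le_trans (Nat.mul_le_mul_right 2 hsub) (by rw [mul_comm]; exact h2)
      exact_mod_cast this
    linarith
  -- ∑ p ≤ k
  have hsum : ∑ j, p j ≤ (k : ℝ) := by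
    have hNat : ∑ j : Fin (2*n), (L.filter (fun ℓ => ℓ j = true ∧
        (Finset.univ.filter (fun i => i < j ∧ ℓ i = true)).card < k)).card ≤ 2^n * k := by
      calc ∑ j : Fin (2*n), (L.filter (fun ℓ => ℓ j = true ∧
            (Finset.univ.filter (fun i => i < j ∧ ℓ i = true)).card < k)).card
          = ∑ j : Fin (2*n), ∑ ℓ ∈ L, if ℓ j = true ∧
            (Finset.univ.filter (fun i => i < j ∧ ℓ i = true)).card < k then 1 else 0 :=
            Finset.sum_congr rfl (fun j _ => Finset.card_filter _ _)
        _ = ∑ ℓ ∈ L, ∑ j : Fin (2*n), if ℓ j = true ∧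
            (Finset.univ.filter (fun i => i < j ∧ ℓ i = true)).card < k then 1 else 0 :=
            Finset.sum_comm
        _ = ∑ ℓ ∈ L, (univ.filter (fun j : Fin (2*n) => ℓ j = true ∧
            (Finset.univ.filter (fun i => i < j ∧ ℓ i = true)).card < k)).card :=
            Finset.sum_congr rfl (fun ℓ _ => (Finset.card_filter _ _).symm)
        _ ≤ ∑ _ℓ ∈ L, k := Finset.sum_le_sum (fun ℓ _ => selected_card_le ℓ)
        _ = L.card * k := by simp [mul_comm]
        _ ≤ 2^n * k := Nat.mul_le_mul_right _ hcardL
    have heq : ∑ j, p j = (∑ j : Fin (2*n), ((L.filter (fun ℓ => ℓ j = true ∧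
        (Finset.univ.filter (fun i => i < j ∧ ℓ i = true)).card < k)).card : ℝ)) / 2^n := by
      rw [Finset.sum_div]
      exact Finset.sum_congr rfl (fun j _ => hp j)
    rw [heq, div_le_iff₀ (by positivity)]
    calc (∑ j : Fin (2*n), ((L.filter (fun ℓ => ℓ j = true ∧
          (Finset.univ.filter (fun i => i < j ∧ ℓ i = true)).card < k)).card : ℝ))
        ≤ ((2^n * k : ℕ) : ℝ) := by exact_mod_cast hNat
      _ = (k : ℝ) * 2^n := by push_cast; ring
  exact key_ineq (2*n) k (by omega) p Y hp0 hp1 hsum hY0 hY.antitone
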